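/- arXiv:1104.4573 — 4 statements merged into one kernel-verified Lean document; each statement's English description precedes it below -/
import Mathlib

section
/- Let R be a commutative ring, σ a finite index type, and for n : σ →₀ ℕ let D_n be the divided-power operator on MvPolynomial σ R. Then for all m, n : σ →₀ ℕ one has the composition rule D_m ∘ D_n = (∏ i, Nat.choose (m i + n i) (n i)) • D_{m+n}; in particular D_m ∘ D_n = D_n ∘ D_m. -/
/-- The divided-power operator `D_n` on `MvPolynomial σ R`, determined on monomials by
`D_n (X ^ m) = (∏ i, Nat.choose (m i) (n i)) • X ^ (m - n)` (componentwise truncated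
subtraction). -/
noncomputable def dpOp (R : Type*) [CommRing R] (σ : Type*) [Fintype σ] (n : σ →₀ ℕ) :
    MvPolynomial σ R →ₗ[R] MvPolynomial σ R :=
  (Finsupp.lsum ℕ fun m : σ →₀ ℕ =>
    (∏ i, Nat.choose (m i) (n i)) • (MvPolynomial.monomial (m - n) : R →ₗ[R] MvPolynomial σ R))
    ∘ₗ (AddMonoidAlgebra.coeffLinearEquiv R).toLinearMap

lemma choose_key (k n m : ℕ) : Nat.choose k n * Nat.choose (k - n) m
    = Nat.choose (m + n) n * Nat.choose k (m + n) := by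
  rcases le_or_gt (m + n) k with h | h
  · have := Nat.choose_mul (n := k) (k := m + n) (s := n) (Nat.le_add_left _ _)
    rw [Nat.add_sub_cancel] at this
    rw [← this, Nat.mul_comm]
  · rcases le_or_gt n k with h2 | h2
    · have : k - n < m := by omega
      simp [Nat.choose_eq_zero_of_lt h, Nat.choose_eq_zero_of_lt this]
    · simp [Nat.choose_eq_zero_of_lt h, Nat.choose_eq_zero_of_lt h2]

lemma dpOp_monomial (R : Type*) [CommRing R] (σ : Type*) [Fintype σ] (n k : σ →₀ ℕ) (r : R) :
    dpOp R σ n (MvPolynomial.monomial k r)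
      = (∏ i, Nat.choose (k i) (n i)) • MvPolynomial.monomial (k - n) r := by
  show (Finsupp.lsum ℕ _) (Finsupp.single k r) = _
  rw [Finsupp.lsum_single]
  simp

/-- Composition rule for divided-power operators:
`D_m ∘ D_n = (∏ i, (m i + n i).choose (n i)) • D_(m+n)`; in particular they commute. -/
theorem dpOp_comp_rule (R : Type*) [CommRing R] (σ : Type*) [Fintype σ] :
    ∀ m n : σ →₀ ℕ,
      (dpOp R σ m) ∘ₗ (dpOp R σ n)
          = (∏ i, Nat.choose (m i + n i) (n i)) • dpOp R σ (m + n) ∧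
      (dpOp R σ m) ∘ₗ (dpOp R σ n) = (dpOp R σ n) ∘ₗ (dpOp R σ m) := by
  have key : ∀ m n : σ →₀ ℕ, (dpOp R σ m) ∘ₗ (dpOp R σ n)
      = (∏ i, Nat.choose (m i + n i) (n i)) • dpOp R σ (m + n) := by
    intro m n
    ext k : 1
    apply LinearMap.ext_ring
    change (dpOp R σ m) ((dpOp R σ n) (MvPolynomial.monomial k 1)) =
      (∏ i, Nat.choose (m i + n i) (n i)) • (dpOp R σ (m + n)) (MvPolynomial.monomial k 1)
    simp only [LinearMap.comp_apply, LinearMap.smul_apply, dpOp_monomial,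
      LinearMap.map_smul_of_tower, smul_smul]
    congr 1
    · rw [← Finset.prod_mul_distrib, ← Finset.prod_mul_distrib]
      apply Finset.prod_congr rfl
      intro i _
      simp only [Finsupp.tsub_apply, Finsupp.add_apply]
      exact choose_key (k i) (n i) (m i)
    · congr 1
      rw [tsub_tsub, add_comm]
  intro m n
  refine ⟨key m n, ?_⟩
  rw [key m n, key n m, add_comm n m]
  congr 1
  apply Finset.prod_congr rfl
  intro i _
  rw [add_comm (n i) (m i), Nat.choose_symm_add]
end

section
/- Let R be a commutative ring, k ∈ ℕ, and B = MvPolynomial (Fin k) R. Every R-linear endomorphism D of B which is a differential operator of order ≤ m (Grothendieck's inductive definition) can be written as D = Σ_{n : Fin k →₀ ℕ, |n| ≤ m} b_n • D_n with coefficients b_n ∈ B, and these coefficients are uniquely determined by D. (The divided-power operators D_n form a basis of the differential operators as a left B-module.) -/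
/-- `D` is a differential operator of order `≤ m` in Grothendieck's sense: every
`(m+1)`-fold iterated commutator of `D` with multiplication operators vanishes. -/
def IsDiffOpLE (R : Type*) {A : Type*} [CommRing R] [CommRing A] [Algebra R A]
    (m : ℕ) (D : A →ₗ[R] A) : Prop :=
  ∀ a : Fin (m + 1) → A,
    Fin.foldl (m + 1)
      (fun E i => E ∘ₗ LinearMap.mulLeft R (a i) - LinearMap.mulLeft R (a i) ∘ₗ E) D = 0

section Bracket

variable (R : Type*) {A : Type*} [CommRing R] [CommRing A] [Algebra R A]

/-- commutator of `D` with multiplication by `a`. -/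
noncomputable def brkt (a : A) (D : A →ₗ[R] A) : A →ₗ[R] A :=
  D ∘ₗ LinearMap.mulLeft R a - LinearMap.mulLeft R a ∘ₗ D

variable {R}

lemma brkt_apply (a : A) (D : A →ₗ[R] A) (x : A) :
    brkt R a D x = D (a * x) - a * D x := rfl

lemma isDiffOpLE_zero_iff {D : A →ₗ[R] A} :
    IsDiffOpLE R 0 D ↔ ∀ a : A, brkt R a D = 0 := by
  constructor
  · intro h a
    simpa [Fin.foldl_succ, brkt] using h (fun _ => a)
  · intro h a
    simpa [Fin.foldl_succ, brkt] using h (a 0)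

lemma isDiffOpLE_succ_iff {m : ℕ} {D : A →ₗ[R] A} :
    IsDiffOpLE R (m + 1) D ↔ ∀ a : A, IsDiffOpLE R m (brkt R a D) := by
  constructor
  · intro h a0 a
    have := h (Fin.cons a0 a)
    rw [Fin.foldl_succ] at this
    simpa [Fin.cons_succ, Fin.cons_zero, brkt] using this
  · intro h a
    rw [Fin.foldl_succ]
    exact h (a 0) (fun i => a i.succ)

lemma brkt_add (a : A) (D E : A →ₗ[R] A) :
    brkt R a (D + E) = brkt R a D + brkt R a E := by
  ext x; simp [brkt_apply]; ring

lemma brkt_zero (a : A) : brkt R a (0 : A →ₗ[R] A) = 0 := by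
  ext x; simp [brkt_apply]

lemma brkt_smul (a b : A) (D : A →ₗ[R] A) :
    brkt R a (b • D) = b • brkt R a D := by
  ext x; simp [brkt_apply, smul_eq_mul]; ring

lemma brkt_comp_mulLeft (a b : A) (D : A →ₗ[R] A) :
    brkt R a (D ∘ₗ LinearMap.mulLeft R b) = brkt R a D ∘ₗ LinearMap.mulLeft R b := by
  ext x; simp [brkt_apply]; ring_nf

lemma brkt_algebraMap (r : R) (D : A →ₗ[R] A) : brkt R (algebraMap R A r) D = 0 := by
  ext x
  simp [brkt_apply, ← Algebra.smul_def]

lemma brkt_add_left (a b : A) (D : A →ₗ[R] A) :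
    brkt R (a + b) D = brkt R a D + brkt R b D := by
  ext x; simp [brkt_apply, add_mul]; ring

lemma brkt_mul_left (a b : A) (D : A →ₗ[R] A) :
    brkt R (a * b) D = brkt R a D ∘ₗ LinearMap.mulLeft R b + (a • brkt R b D) := by
  ext x; simp [brkt_apply, smul_eq_mul, mul_assoc]; ring

lemma IsDiffOpLE.zero (m : ℕ) : IsDiffOpLE R m (0 : A →ₗ[R] A) := by
  induction m with
  | zero => exact isDiffOpLE_zero_iff.2 fun a => brkt_zero a
  | succ m ih => exact isDiffOpLE_succ_iff.2 fun a => by rw [brkt_zero]; exact ih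

lemma IsDiffOpLE.add {m : ℕ} {D E : A →ₗ[R] A} (hD : IsDiffOpLE R m D)
    (hE : IsDiffOpLE R m E) : IsDiffOpLE R m (D + E) := by
  induction m generalizing D E with
  | zero =>
    rw [isDiffOpLE_zero_iff] at *
    intro a; rw [brkt_add, hD a, hE a, add_zero]
  | succ m ih =>
    rw [isDiffOpLE_succ_iff] at *
    intro a; rw [brkt_add]; exact ih (hD a) (hE a)

lemma IsDiffOpLE.smul {m : ℕ} (b : A) {D : A →ₗ[R] A} (hD : IsDiffOpLE R m D) :
    IsDiffOpLE R m (b • D) := by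
  induction m generalizing D with
  | zero =>
    rw [isDiffOpLE_zero_iff] at *
    intro a; rw [brkt_smul, hD a, smul_zero]
  | succ m ih =>
    rw [isDiffOpLE_succ_iff] at *
    intro a; rw [brkt_smul]; exact ih (hD a)

lemma IsDiffOpLE.comp_mulLeft {m : ℕ} (b : A) {D : A →ₗ[R] A} (hD : IsDiffOpLE R m D) :
    IsDiffOpLE R m (D ∘ₗ LinearMap.mulLeft R b) := by
  induction m generalizing D with
  | zero =>
    rw [isDiffOpLE_zero_iff] at *
    intro a; rw [brkt_comp_mulLeft, hD a, LinearMap.zero_comp]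
  | succ m ih =>
    rw [isDiffOpLE_succ_iff] at *
    intro a; rw [brkt_comp_mulLeft]; exact ih (hD a)

lemma IsDiffOpLE.succ_of_le {m : ℕ} {D : A →ₗ[R] A} (hD : IsDiffOpLE R m D) :
    IsDiffOpLE R (m + 1) D := by
  induction m generalizing D with
  | zero =>
    rw [isDiffOpLE_zero_iff] at hD
    exact isDiffOpLE_succ_iff.2 fun a => by rw [hD a]; exact IsDiffOpLE.zero 0
  | succ m ih =>
    rw [isDiffOpLE_succ_iff] at *
    exact fun a => ih (hD a)

lemma IsDiffOpLE.mono {m m' : ℕ} (h : m ≤ m') {D : A →ₗ[R] A} (hD : IsDiffOpLE R m D) :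
    IsDiffOpLE R m' D := by
  induction h with
  | refl => exact hD
  | step _ ih => exact ih.succ_of_le

end Bracket
section MV
open MvPolynomial

variable {R : Type*} [CommRing R] {σ : Type*} [Fintype σ] [DecidableEq σ]

lemma dpOp_monomial_s5 (n q : σ →₀ ℕ) (c : R) :
    dpOp R σ n (monomial q c) =
      (∏ i, (q i).choose (n i)) • monomial (q - n) c := by
  rw [← single_eq_monomial]
  show (Finsupp.lsum ℕ (fun m : σ →₀ ℕ => (∏ i, Nat.choose (m i) (n i)) •
    (MvPolynomial.monomial (m - n) : R →ₗ[R] MvPolynomial σ R))) (Finsupp.single q c) = _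
  rw [Finsupp.lsum_single]
  rfl

lemma lhom_ext_mv {D E : MvPolynomial σ R →ₗ[R] MvPolynomial σ R}
    (h : ∀ (q : σ →₀ ℕ) (c : R), D (monomial q c) = E (monomial q c)) : D = E :=
  MvPolynomial.linearMap_ext fun q => LinearMap.ext fun c => h q c

/-- generator criterion via the subalgebra trick -/
lemma forall_brkt (P : (MvPolynomial σ R →ₗ[R] MvPolynomial σ R) → Prop)
    (h0 : P 0) (hadd : ∀ D E, P D → P E → P (D + E))
    (hsmul : ∀ (f : MvPolynomial σ R) D, P D → P (f • D))
    (hcomp : ∀ (f : MvPolynomial σ R) D, P D → P (D ∘ₗ LinearMap.mulLeft R f))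
    (D : MvPolynomial σ R →ₗ[R] MvPolynomial σ R)
    (hX : ∀ i : σ, P (brkt R (X i) D)) : ∀ a, P (brkt R a D) := by
  intro a
  have ha : a ∈ Algebra.adjoin R (Set.range (X : σ → MvPolynomial σ R)) := by
    rw [MvPolynomial.adjoin_range_X]; trivial
  induction ha using Algebra.adjoin_induction with
  | mem x hx => obtain ⟨i, rfl⟩ := hx; exact hX i
  | algebraMap r => rw [brkt_algebraMap]; exact h0
  | add x y hx hy px py => rw [brkt_add_left]; exact hadd _ _ px py
  | mul x y hx hy px py =>
    rw [brkt_mul_left]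
    exact hadd _ _ (hcomp _ _ px) (hsmul _ _ py)

end MV
section CommutatorX
open MvPolynomial

set_option linter.unusedSectionVars false

variable {R : Type*} [CommRing R] {σ : Type*} [Fintype σ] [DecidableEq σ]

lemma brkt_X_dpOp (n : σ →₀ ℕ) (i : σ) :
    brkt R (X i : MvPolynomial σ R) (dpOp R σ n) =
      if n i = 0 then 0 else dpOp R σ (n - Finsupp.single i 1) := by
  apply lhom_ext_mv
  intro q c
  have hXmul : ∀ (p : σ →₀ ℕ) (d : R),
      (X i : MvPolynomial σ R) * monomial p d = monomial (Finsupp.single i 1 + p) d := by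
    intro p d
    rw [X, monomial_mul, one_mul]
  rw [brkt_apply, hXmul, dpOp_monomial_s5, dpOp_monomial_s5, mul_smul_comm, hXmul]
  by_cases h : n i = 0
  · rw [if_pos h, LinearMap.zero_apply]
    have hprod : (∏ j, ((Finsupp.single i 1 + q : σ →₀ ℕ) j).choose (n j)) =
        ∏ j, (q j).choose (n j) := by
      refine Finset.prod_congr rfl fun j _ => ?_
      rcases eq_or_ne j i with rfl | hj
      · simp [h]
      · simp [Finsupp.add_apply, Finsupp.single_eq_of_ne' (Ne.symm hj)]
    have hexp : Finsupp.single i 1 + q - n = Finsupp.single i 1 + (q - n) := by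
      ext j
      rcases eq_or_ne j i with rfl | hj
      · simp only [Finsupp.tsub_apply, Finsupp.add_apply, Finsupp.single_eq_same]
        omega
      · simp only [Finsupp.tsub_apply, Finsupp.add_apply,
          Finsupp.single_eq_of_ne' (Ne.symm hj)]
        omega
    rw [hprod, hexp, sub_self]
  · rw [if_neg h, dpOp_monomial_s5]
    obtain ⟨s, hs⟩ := Nat.exists_eq_succ_of_ne_zero h
    have hsub : (n - Finsupp.single i 1 : σ →₀ ℕ) i = s := by
      simp only [Finsupp.tsub_apply, Finsupp.single_eq_same]
      omega
    rw [← Finset.mul_prod_erase Finset.univ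
        (fun j => ((Finsupp.single i 1 + q : σ →₀ ℕ) j).choose (n j)) (Finset.mem_univ i),
        ← Finset.mul_prod_erase Finset.univ
        (fun j => (q j).choose (n j)) (Finset.mem_univ i),
        ← Finset.mul_prod_erase Finset.univ
        (fun j => (q j).choose ((n - Finsupp.single i 1 : σ →₀ ℕ) j)) (Finset.mem_univ i)]
    have hP1 : (∏ j ∈ Finset.univ.erase i,
          ((Finsupp.single i 1 + q : σ →₀ ℕ) j).choose (n j)) =
        ∏ j ∈ Finset.univ.erase i, (q j).choose (n j) := by
      refine Finset.prod_congr rfl fun j hj => ?_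
      have hj' := Finset.ne_of_mem_erase hj
      simp [Finsupp.add_apply, Finsupp.single_eq_of_ne' (Ne.symm hj')]
    have hP3 : (∏ j ∈ Finset.univ.erase i,
          (q j).choose ((n - Finsupp.single i 1 : σ →₀ ℕ) j)) =
        ∏ j ∈ Finset.univ.erase i, (q j).choose (n j) := by
      refine Finset.prod_congr rfl fun j hj => ?_
      have hj' := Finset.ne_of_mem_erase hj
      simp [Finsupp.tsub_apply, Finsupp.single_eq_of_ne' (Ne.symm hj')]
    have hqi : ((Finsupp.single i 1 + q : σ →₀ ℕ) i) = 1 + q i := by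
      simp [Finsupp.add_apply]
    rw [hP1, hP3, hsub, hqi]
    set P := ∏ j ∈ Finset.univ.erase i, (q j).choose (n j) with hP
    rcases le_or_gt (n i) (q i) with hq | hq
    · have hE1 : Finsupp.single i 1 + q - n = q - (n - Finsupp.single i 1) := by
        ext j
        rcases eq_or_ne j i with rfl | hj
        · simp only [Finsupp.tsub_apply, Finsupp.add_apply, Finsupp.single_eq_same]
          omega
        · simp only [Finsupp.tsub_apply, Finsupp.add_apply,
            Finsupp.single_eq_of_ne' (Ne.symm hj)]
          omega
      have hE2 : Finsupp.single i 1 + (q - n) = q - (n - Finsupp.single i 1) := by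
        ext j
        rcases eq_or_ne j i with rfl | hj
        · simp only [Finsupp.tsub_apply, Finsupp.add_apply, Finsupp.single_eq_same]
          omega
        · simp only [Finsupp.tsub_apply, Finsupp.add_apply,
            Finsupp.single_eq_of_ne' (Ne.symm hj)]
          omega
      rw [hE1, hE2]
      have hpascal : (1 + q i).choose (n i) = (q i).choose s + (q i).choose (n i) := by
        rw [hs, add_comm 1 (q i), Nat.choose_succ_succ]
      rw [hpascal, add_mul, add_smul, add_sub_cancel_right]
    · have h2 : (q i).choose (n i) = 0 := Nat.choose_eq_zero_of_lt hq
      rw [h2, zero_mul, zero_smul, sub_zero]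
      rcases eq_or_lt_of_le (Nat.lt_succ_iff.mp (hs ▸ hq)) with heq | hlt
      · have h1 : (1 + q i).choose (n i) = 1 := by
          rw [hs, ← heq, add_comm, Nat.choose_self]
        have h3 : (q i).choose s = 1 := by rw [← heq, Nat.choose_self]
        have hE : Finsupp.single i 1 + q - n = q - (n - Finsupp.single i 1) := by
          ext j
          rcases eq_or_ne j i with rfl | hj
          · simp only [Finsupp.tsub_apply, Finsupp.add_apply, Finsupp.single_eq_same]
            omega
          · simp only [Finsupp.tsub_apply, Finsupp.add_apply,
              Finsupp.single_eq_of_ne' (Ne.symm hj)]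
            omega
        rw [h1, h3, hE]
      · have h1 : (1 + q i).choose (n i) = 0 :=
          Nat.choose_eq_zero_of_lt (by omega)
        have h3 : (q i).choose s = 0 := Nat.choose_eq_zero_of_lt hlt
        rw [h1, h3, zero_mul, zero_smul, zero_smul]

end CommutatorX
section OrderBound
open MvPolynomial

set_option linter.unusedSectionVars false

variable {R : Type*} [CommRing R] {σ : Type*} [Fintype σ] [DecidableEq σ]

lemma dpOp_zero_eq : dpOp R σ 0 = LinearMap.id := by
  apply lhom_ext_mv
  intro q c
  simp [dpOp_monomial_s5]

lemma isDiffOpLE_id : IsDiffOpLE R 0 (LinearMap.id : MvPolynomial σ R →ₗ[R] MvPolynomial σ R) := by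
  refine isDiffOpLE_zero_iff.2 fun a => ?_
  ext x
  simp [brkt_apply]

lemma sum_sub_single (n : σ →₀ ℕ) (i : σ) (h : n i ≠ 0) :
    (∑ j, (n - Finsupp.single i 1 : σ →₀ ℕ) j) + 1 = ∑ j, n j := by
  rw [← Finset.add_sum_erase Finset.univ
      (fun j => (n - Finsupp.single i 1 : σ →₀ ℕ) j) (Finset.mem_univ i),
    ← Finset.add_sum_erase Finset.univ (fun j => n j) (Finset.mem_univ i)]
  have hrest : (∑ j ∈ Finset.univ.erase i, (n - Finsupp.single i 1 : σ →₀ ℕ) j) =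
      ∑ j ∈ Finset.univ.erase i, n j := by
    refine Finset.sum_congr rfl fun j hj => ?_
    have hj' := Finset.ne_of_mem_erase hj
    simp [Finsupp.tsub_apply, Finsupp.single_eq_of_ne' (Ne.symm hj')]
  have hi : (n - Finsupp.single i 1 : σ →₀ ℕ) i = n i - 1 := by
    simp [Finsupp.tsub_apply]
  rw [hrest, hi]
  omega

lemma isDiffOpLE_dpOp : ∀ (m : ℕ) (n : σ →₀ ℕ), (∑ i, n i) ≤ m →
    IsDiffOpLE R m (dpOp R σ n) := by
  intro m
  induction m with
  | zero =>
    intro n hn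
    have : n = 0 := by
      ext i
      exact (Finset.sum_eq_zero_iff.mp (Nat.le_zero.mp hn)) i (Finset.mem_univ i)
    rw [this, dpOp_zero_eq]
    exact isDiffOpLE_id
  | succ m ih =>
    intro n hn
    refine isDiffOpLE_succ_iff.2 ?_
    refine forall_brkt _ (IsDiffOpLE.zero m) (fun D E hD hE => hD.add hE)
      (fun f D hD => hD.smul f) (fun f D hD => hD.comp_mulLeft f) _ (fun i => ?_)
    rw [brkt_X_dpOp]
    split_ifs with h
    · exact IsDiffOpLE.zero m
    · refine ih _ ?_
      have := sum_sub_single n i h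
      omega

lemma eq_zero_of_vanish : ∀ (m : ℕ) (D : MvPolynomial σ R →ₗ[R] MvPolynomial σ R),
    IsDiffOpLE R m D → (∀ q : σ →₀ ℕ, (∑ i, q i) ≤ m → D (monomial q 1) = 0) → D = 0 := by
  intro m
  induction m with
  | zero =>
    intro D hD hv
    have h1 : D 1 = 0 := by
      have := hv 0 (by simp)
      simpa using this
    refine LinearMap.ext fun f => ?_
    have hb : brkt R f D = 0 := isDiffOpLE_zero_iff.mp hD f
    have := congrArg (fun (E : MvPolynomial σ R →ₗ[R] MvPolynomial σ R) => E 1) hb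
    simp only [brkt_apply, mul_one, h1, mul_zero, sub_zero, LinearMap.zero_apply] at this
    simpa using this
  | succ m ih =>
    intro D hD hv
    have h1 : D 1 = 0 := by
      have := hv 0 (by simp)
      simpa using this
    have hbr : ∀ a, brkt R a D = 0 := by
      refine forall_brkt (fun E => E = 0) rfl (fun D E h h' => by rw [h, h', add_zero])
        (fun f D h => by rw [h, smul_zero]) (fun f D h => by rw [h, LinearMap.zero_comp]) _
        (fun i => ?_)
      refine ih _ (isDiffOpLE_succ_iff.mp hD _) fun q hq => ?_
      rw [brkt_apply]
      have hx : (X i : MvPolynomial σ R) * monomial q 1 =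
          monomial (Finsupp.single i 1 + q) 1 := by
        rw [X, monomial_mul, one_mul]
      rw [hx, hv q (by omega), mul_zero, sub_zero]
      refine hv _ ?_
      have := sum_sub_single (Finsupp.single i 1 + q) i (by simp [Finsupp.add_apply])
      have heq : (Finsupp.single i 1 + q - Finsupp.single i 1 : σ →₀ ℕ) = q := by
        ext j
        rcases eq_or_ne j i with rfl | hj
        · simp only [Finsupp.tsub_apply, Finsupp.add_apply, Finsupp.single_eq_same]
          omega
        · simp only [Finsupp.tsub_apply, Finsupp.add_apply,
            Finsupp.single_eq_of_ne (Ne.symm hj)]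
          omega
      rw [heq] at this
      omega
    refine LinearMap.ext fun f => ?_
    have := congrArg (fun (E : MvPolynomial σ R →ₗ[R] MvPolynomial σ R) => E 1) (hbr f)
    simp only [brkt_apply, mul_one, h1, mul_zero, sub_zero, LinearMap.zero_apply] at this
    simpa using this

end OrderBound
section Coeffs
open MvPolynomial

set_option linter.unusedSectionVars false

variable {R : Type*} [CommRing R] {σ : Type*} [Fintype σ] [DecidableEq σ]

lemma finsupp_sum_lt {p n : σ →₀ ℕ} (hle : p ≤ n) (hne : p ≠ n) :
    (∑ i, p i) < ∑ i, n i := by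
  refine Finset.sum_lt_sum (fun i _ => Finsupp.le_def.mp hle i) ?_
  by_contra hc
  push_neg at hc
  exact hne (Finsupp.ext fun i =>
    le_antisymm (Finsupp.le_def.mp hle i) (hc i (Finset.mem_univ i)))

lemma prod_choose_self (n : σ →₀ ℕ) : (∏ i, (n i).choose (n i)) = 1 :=
  Finset.prod_eq_one fun i _ => Nat.choose_self _

lemma prod_choose_eq_zero {p n : σ →₀ ℕ} (h : ¬ p ≤ n) :
    (∏ i, (n i).choose (p i)) = 0 := by
  rw [Finsupp.le_def] at h
  push_neg at h
  obtain ⟨i, hi⟩ := h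
  exact Finset.prod_eq_zero (Finset.mem_univ i) (Nat.choose_eq_zero_of_lt hi)

/-- recursively defined coefficients of `D` in the divided-power basis -/
noncomputable def bcoef (D : MvPolynomial σ R →ₗ[R] MvPolynomial σ R) (n : σ →₀ ℕ) :
    MvPolynomial σ R :=
  D (monomial n 1) - ∑ p ∈ ((Finset.Iic n).erase n).attach,
    (∏ i, (n i).choose (p.1 i)) • (monomial (n - p.1) 1 * bcoef D p.1)
termination_by ∑ i, n i
decreasing_by
  have hp := p.2
  rw [Finset.mem_erase, Finset.mem_Iic] at hp
  exact finsupp_sum_lt hp.2 hp.1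

lemma bcoef_eq (D : MvPolynomial σ R →ₗ[R] MvPolynomial σ R) (n : σ →₀ ℕ) :
    bcoef D n = D (monomial n 1) - ∑ p ∈ (Finset.Iic n).erase n,
      (∏ i, (n i).choose (p i)) • (monomial (n - p) 1 * bcoef D p) := by
  rw [bcoef]
  congr 1
  exact Finset.sum_attach ((Finset.Iic n).erase n)
    (fun p => (∏ i, (n i).choose (p i)) • (monomial (n - p) 1 * bcoef D p))

lemma bcoef_spec (D : MvPolynomial σ R →ₗ[R] MvPolynomial σ R) (n : σ →₀ ℕ) :
    ∑ p ∈ Finset.Iic n, (∏ i, (n i).choose (p i)) • (monomial (n - p) 1 * bcoef D p) =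
      D (monomial n 1) := by
  rw [← Finset.add_sum_erase _ _ (Finset.mem_Iic.mpr (le_refl n))]
  rw [prod_choose_self, tsub_self, one_smul]
  have h1 : (monomial (0 : σ →₀ ℕ) (1 : R)) = 1 := by
    simp
  rw [h1, one_mul, bcoef_eq]
  ring

lemma eval_sum_dpOp (b : (σ →₀ ℕ) → MvPolynomial σ R) (s : Finset (σ →₀ ℕ)) (q : σ →₀ ℕ) :
    (∑ n ∈ s, b n • dpOp R σ n) (monomial q 1) =
      ∑ n ∈ s, (∏ i, (q i).choose (n i)) • (monomial (q - n) 1 * b n) := by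
  rw [LinearMap.sum_apply]
  refine Finset.sum_congr rfl fun n _ => ?_
  rw [LinearMap.smul_apply, dpOp_monomial_s5, smul_comm, smul_eq_mul, mul_comm]

end Coeffs

open MvPolynomial

/-- Every differential operator of order `≤ m` on `MvPolynomial (Fin k) R` can be written
uniquely as `∑_(|n| ≤ m) b_n • D_n` with coefficients `b_n` in the polynomial ring. -/
theorem isDiffOpLE_eq_sum_dpOp (R : Type*) [CommRing R] (k m : ℕ)
    (D : MvPolynomial (Fin k) R →ₗ[R] MvPolynomial (Fin k) R)
    (hD : IsDiffOpLE R m D) :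
    ∃! b : (Fin k →₀ ℕ) → MvPolynomial (Fin k) R,
      (∀ n : Fin k →₀ ℕ, m < ∑ i, n i → b n = 0) ∧
      D = ∑ᶠ n : Fin k →₀ ℕ, b n • dpOp R (Fin k) n := by
  classical
  set S : Finset (Fin k →₀ ℕ) :=
    Finset.filter (fun n => ∑ i, n i ≤ m)
      (Finset.Iic (Finsupp.equivFunOnFinite.symm fun _ => m)) with hS
  have memS : ∀ n : Fin k →₀ ℕ, n ∈ S ↔ ∑ i, n i ≤ m := by
    intro n
    rw [hS, Finset.mem_filter, Finset.mem_Iic]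
    constructor
    · exact fun h => h.2
    · intro h
      refine ⟨Finsupp.le_def.mpr fun i => ?_, h⟩
      have h1 : n i ≤ ∑ j, n j :=
        Finset.single_le_sum (fun j _ => Nat.zero_le _) (Finset.mem_univ i)
      have h2 : (Finsupp.equivFunOnFinite.symm fun _ => m) i = m := rfl
      omega
  have hsumop : IsDiffOpLE R m (∑ n ∈ S, bcoef D n • dpOp R (Fin k) n) := by
    refine Finset.sum_induction _ _ (fun a b ha hb => ha.add hb) (IsDiffOpLE.zero m) ?_
    intro n hn
    exact (isDiffOpLE_dpOp m n ((memS n).mp hn)).smul _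
  have hrep : D = ∑ n ∈ S, bcoef D n • dpOp R (Fin k) n := by
    have hE : IsDiffOpLE R m (D - ∑ n ∈ S, bcoef D n • dpOp R (Fin k) n) := by
      have heq : D - ∑ n ∈ S, bcoef D n • dpOp R (Fin k) n
          = D + (-1 : MvPolynomial (Fin k) R) • ∑ n ∈ S, bcoef D n • dpOp R (Fin k) n := by
        ext x; simp [sub_eq_add_neg]
      rw [heq]
      exact hD.add (hsumop.smul _)
    have hvan : ∀ q : Fin k →₀ ℕ, (∑ i, q i) ≤ m →
        (D - ∑ n ∈ S, bcoef D n • dpOp R (Fin k) n) (monomial q 1) = 0 := by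
      intro q hq
      rw [LinearMap.sub_apply, eval_sum_dpOp]
      have hsub : Finset.Iic q ⊆ S := by
        intro p hp
        rw [Finset.mem_Iic] at hp
        refine (memS p).mpr ?_
        calc ∑ i, p i ≤ ∑ i, q i := Finset.sum_le_sum fun i _ => Finsupp.le_def.mp hp i
          _ ≤ m := hq
      rw [← Finset.sum_subset hsub ?_]
      · rw [bcoef_spec, sub_self]
      · intro p _ hpq
        rw [Finset.mem_Iic] at hpq
        rw [prod_choose_eq_zero hpq, zero_smul]
    exact sub_eq_zero.mp (eq_zero_of_vanish m _ hE hvan)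
  have hvanish : ∀ n : Fin k →₀ ℕ, m < ∑ i, n i → bcoef D n = 0 := by
    have key : ∀ s : ℕ, ∀ n : Fin k →₀ ℕ, ∑ i, n i = s → m < ∑ i, n i → bcoef D n = 0 := by
      intro s
      induction s using Nat.strong_induction_on with
      | _ s ih =>
        intro n hns hm
        have h0 : D (monomial n 1) =
            ∑ p ∈ S, (∏ i, (n i).choose (p i)) • (monomial (n - p) 1 * bcoef D p) := by
          conv_lhs => rw [hrep]
          rw [eval_sum_dpOp]
        have h1 : (∑ p ∈ S, (∏ i, (n i).choose (p i)) • (monomial (n - p) 1 * bcoef D p))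
            = ∑ p ∈ S ∩ Finset.Iic n,
                (∏ i, (n i).choose (p i)) • (monomial (n - p) 1 * bcoef D p) := by
          refine (Finset.sum_subset Finset.inter_subset_left ?_).symm
          intro p hpS hp
          have hle : ¬ p ≤ n := fun hle =>
            hp (Finset.mem_inter.mpr ⟨hpS, Finset.mem_Iic.mpr hle⟩)
          rw [prod_choose_eq_zero hle, zero_smul]
        have h2 : (∑ p ∈ S ∩ Finset.Iic n,
                (∏ i, (n i).choose (p i)) • (monomial (n - p) 1 * bcoef D p))
            = ∑ p ∈ (Finset.Iic n).erase n,
                (∏ i, (n i).choose (p i)) • (monomial (n - p) 1 * bcoef D p) := by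
          refine Finset.sum_subset ?_ ?_
          · intro p hp
            rw [Finset.mem_inter, Finset.mem_Iic] at hp
            refine Finset.mem_erase.mpr ⟨?_, Finset.mem_Iic.mpr hp.2⟩
            intro hpn
            have hple := (memS p).mp hp.1
            rw [hpn] at hple
            omega
          · intro p hp hpnot
            rw [Finset.mem_erase, Finset.mem_Iic] at hp
            have hlt : ∑ i, p i < s := hns ▸ finsupp_sum_lt hp.2 hp.1
            by_cases hpm : m < ∑ i, p i
            · rw [ih _ hlt p rfl hpm, mul_zero, smul_zero]
            · exact absurd (Finset.mem_inter.mpr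
                ⟨(memS p).mpr (not_lt.mp hpm), Finset.mem_Iic.mpr hp.2⟩) hpnot
        rw [bcoef_eq, ← h2, ← h1, ← h0, sub_self]
    exact fun n hm => key _ n rfl hm
  refine ⟨bcoef D, ⟨hvanish, ?_⟩, ?_⟩
  · have hsupp : (Function.support fun n => bcoef D n • dpOp R (Fin k) n) ⊆ ↑S := by
      intro n hn
      rw [Function.mem_support] at hn
      by_contra hns
      have hz : bcoef D n = 0 :=
        hvanish n (lt_of_not_ge fun h => hns (Finset.mem_coe.mpr ((memS n).mpr h)))
      exact hn (by rw [hz, zero_smul])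
    rw [finsum_eq_sum_of_support_subset _ hsupp]
    exact hrep
  · rintro b' ⟨hb1, hb2⟩
    have hsupp' : (Function.support fun n => b' n • dpOp R (Fin k) n) ⊆ ↑S := by
      intro n hn
      rw [Function.mem_support] at hn
      by_contra hns
      have hz : b' n = 0 :=
        hb1 n (lt_of_not_ge fun h => hns (Finset.mem_coe.mpr ((memS n).mpr h)))
      exact hn (by rw [hz, zero_smul])
    have hrep' : D = ∑ n ∈ S, b' n • dpOp R (Fin k) n := by
      rw [hb2, finsum_eq_sum_of_support_subset _ hsupp']
    have hzero : (∑ p ∈ S, (b' p - bcoef D p) • dpOp R (Fin k) p) = 0 := by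
      have hsplit : ∀ p ∈ S, (b' p - bcoef D p) • dpOp R (Fin k) p =
          b' p • dpOp R (Fin k) p - bcoef D p • dpOp R (Fin k) p := fun p _ => by
        ext x
        simp [sub_mul]
      rw [Finset.sum_congr rfl hsplit, Finset.sum_sub_distrib, ← hrep', ← hrep, sub_self]
    have key : ∀ s : ℕ, ∀ n : Fin k →₀ ℕ, ∑ i, n i = s → b' n = bcoef D n := by
      intro s
      induction s using Nat.strong_induction_on with
      | _ s ih =>
        intro n hns
        by_cases hm : m < ∑ i, n i
        · rw [hb1 n hm, hvanish n hm]
        · have hnS : n ∈ S := (memS n).mpr (not_lt.mp hm)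
          have h0 : (∑ p ∈ S, (∏ i, (n i).choose (p i)) •
              (monomial (n - p) 1 * (b' p - bcoef D p))) = 0 := by
            rw [← eval_sum_dpOp, hzero, LinearMap.zero_apply]
          rw [Finset.sum_eq_single n ?_ ?_] at h0
          · rw [prod_choose_self, tsub_self, one_smul] at h0
            have h1 : (monomial (0 : Fin k →₀ ℕ) (1 : R)) = 1 := by simp
            rw [h1, one_mul] at h0
            exact sub_eq_zero.mp h0
          · intro p _ hpn
            by_cases hle : p ≤ n
            · have hlt : ∑ i, p i < s := hns ▸ finsupp_sum_lt hle hpn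
              rw [ih _ hlt p rfl, sub_self, mul_zero, smul_zero]
            · rw [prod_choose_eq_zero hle, zero_smul]
          · exact fun hnot => absurd hnS hnot
    exact funext fun n => key _ n rfl
end

section
/- Let p be a prime, R a commutative ring, and A a commutative R-algebra of characteristic p. Let D be an R-linear endomorphism of A such that every p-fold iterated commutator with multiplication operators vanishes: for all a₁, …, a_p ∈ A, [[…[D, t_{a₁}], t_{a₂}], …, t_{a_p}] = 0 (i.e. D is a differential operator of order ≤ p − 1). Then D commutes with multiplication by every p-th power: D(a^p * x) = a^p * D(x) for all a, x ∈ A. -/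
private lemma charP_end_aux {R M : Type*} [CommSemiring R] [AddCommMonoid M] [Module R M]
    {p : ℕ} (h : ∀ n : ℕ, (∀ x : M, n • x = 0) ↔ p ∣ n) : CharP (Module.End R M) p :=
  ⟨fun n => by
    rw [← h n]
    constructor
    · intro hn x
      have := congrArg (fun f : Module.End R M => f x) hn
      simpa [Module.End.natCast_apply] using this
    · intro hn
      ext x
      simpa [Module.End.natCast_apply] using hn x⟩

/-- In characteristic `p`, an `R`-linear endomorphism `D` of `A` all of whose `p`-fold
iterated commutators with multiplication operators vanish (i.e. a differential operator of
order `≤ p - 1`) commutes with multiplication by `p`-th powers. -/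
theorem diffOp_order_lt_p_commutes_pow (p : ℕ) (hp : p.Prime) (R A : Type*) [CommRing R]
    [CommRing A] [Algebra R A] [CharP A p] (D : A →ₗ[R] A)
    (hD : ∀ a : Fin p → A,
      Fin.foldl p
        (fun E i => E ∘ₗ LinearMap.mulLeft R (a i) - LinearMap.mulLeft R (a i) ∘ₗ E) D = 0)
    (a x : A) :
    D (a ^ p * x) = a ^ p * D x := by
  haveI : Fact p.Prime := ⟨hp⟩
  -- characteristic p of End R A
  haveI hS : CharP (Module.End R A) p := charP_end_aux (fun n => by
    constructor
    · intro hx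
      have h1 := hx 1
      rw [nsmul_eq_mul, mul_one] at h1
      exact (CharP.cast_eq_zero_iff A p n).mp h1
    · intro hn y
      rw [nsmul_eq_mul, (CharP.cast_eq_zero_iff A p n).mpr hn, zero_mul])
  haveI hE : CharP (Module.End R (Module.End R A)) p := charP_end_aux (fun n => by
    constructor
    · intro hx
      have h1 := hx 1
      exact (CharP.cast_eq_zero_iff (Module.End R A) p n).mp (by simpa using h1)
    · intro hn y
      have : ((n : ℕ) : Module.End R A) = 0 := (CharP.cast_eq_zero_iff _ p n).mpr hn
      calc n • y = ((n : ℕ) : Module.End R A) * y := by rw [nsmul_eq_mul]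
        _ = 0 := by rw [this, zero_mul])
  set T : Module.End R A := LinearMap.mulLeft R a with hT
  set F : Module.End R (Module.End R A) :=
    LinearMap.mulRight R T - LinearMap.mulLeft R T with hF
  have hcomm : Commute (LinearMap.mulRight R T) (LinearMap.mulLeft R T) :=
    (LinearMap.commute_mulLeft_right (R := R) (a := T) (b := T)).symm
  have hFp : F ^ p = LinearMap.mulRight R (T ^ p) - LinearMap.mulLeft R (T ^ p) := by
    rw [hF, sub_pow_char_of_commute (R := Module.End R (Module.End R A)) (p := p) hcomm]
    simp only [hT, LinearMap.pow_mulRight, LinearMap.pow_mulLeft]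
  -- fold = iterate
  have hfold : ∀ (n : ℕ) (E : Module.End R A),
      Fin.foldl n (fun E (_ : Fin n) => E ∘ₗ T - T ∘ₗ E) E = (F ^ n) E := by
    intro n
    induction n with
    | zero => intro E; simp
    | succ n ih =>
      intro E
      rw [Fin.foldl_succ, ih, pow_succ, Module.End.mul_apply]
      rfl
  have key := hD (fun _ => a)
  rw [hfold p D] at key
  rw [hFp] at key
  have key2 : D * T ^ p - T ^ p * D = 0 := by
    simpa using key
  have key3 : D ∘ₗ LinearMap.mulLeft R (a ^ p) = LinearMap.mulLeft R (a ^ p) ∘ₗ D := by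
    have := sub_eq_zero.mp key2
    rw [hT, LinearMap.pow_mulLeft] at this
    simpa [Module.End.mul_eq_comp] using this
  have := LinearMap.ext_iff.mp key3 x
  simpa using this
end

section
/- Let A be a discrete valuation ring and M a finitely generated A-module. Let (M^i)_{i ∈ ℕ} be a decreasing sequence of submodules of M and let M^∞ = ⋂_i M^i. Suppose there exists d such that the quotient M^d / M^∞ is a torsion A-module (equivalently, for every x ∈ M^d there is a nonzero a ∈ A with a • x ∈ M^∞). Then the chain stabilizes at M^∞: there exists d' such that M^i = M^∞ for all i ≥ d'. -/
/-- Over a DVR `A`, a decreasing chain of submodules of a finitely generated module whose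
term `M^d` has torsion quotient `M^d / M^∞` (elementwise: every `x ∈ M^d` is sent into
`M^∞ = ⋂ i, M^i` by some nonzero scalar) stabilizes at `M^∞`. -/
theorem chain_stabilizes_of_torsion_quotient (A : Type*) [CommRing A] [IsDomain A]
    [IsDiscreteValuationRing A] (M : Type*) [AddCommGroup M] [Module A M] [Module.Finite A M]
    (N : ℕ → Submodule A M) (hdec : ∀ i j : ℕ, i ≤ j → N j ≤ N i)
    (htor : ∃ d : ℕ, ∀ x ∈ N d, ∃ a : A, a ≠ 0 ∧ a • x ∈ ⨅ i : ℕ, N i) :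
    ∃ d' : ℕ, ∀ i ≥ d', N i = ⨅ j : ℕ, N j := by
  classical
  obtain ⟨d, hd⟩ := htor
  set Ninf : Submodule A M := ⨅ i, N i with hNinf
  have hinf_le : ∀ i, Ninf ≤ N i := fun i => iInf_le _ i
  haveI : IsNoetherian A M := inferInstance
  have hfg : (N d).FG := IsNoetherian.noetherian _
  obtain ⟨s, hs⟩ := hfg
  -- get a single nonzero scalar `a` mapping all of `N d` into `Ninf`
  have hmem : ∀ x ∈ s, x ∈ N d := fun x hx => hs ▸ Submodule.subset_span hx
  choose f hf0 hfmem using fun (x : M) (hx : x ∈ s) => hd x (hmem x hx)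
  set a : A := ∏ x ∈ s.attach, f x.1 x.2 with ha_def
  have ha0 : a ≠ 0 := Finset.prod_ne_zero_iff.mpr fun x _ => hf0 x.1 x.2
  have ha : ∀ x ∈ N d, a • x ∈ Ninf := by
    intro x hx
    have hx' : x ∈ Submodule.span A (s : Set M) := hs.symm ▸ hx
    have : Submodule.span A (s : Set M) ≤ Ninf.comap (LinearMap.lsmul A M a) := by
      rw [Submodule.span_le]
      intro y hy
      have hy' : y ∈ s := hy
      simp only [SetLike.mem_coe, Submodule.mem_comap, LinearMap.lsmul_apply]
      have := Finset.prod_erase_mul s.attach (fun x => f x.1 x.2)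
        (Finset.mem_attach s ⟨y, hy'⟩)
      rw [ha_def, ← this, mul_smul]
      exact Submodule.smul_mem _ _ (hfmem y hy')
    simpa using this hx'
  -- the quotient chain lives in `P`, an Artinian module
  set φ := Ninf.mkQ with hφ
  set P : Submodule A (M ⧸ Ninf) := (N d).map φ with hP
  set I : Ideal A := Ideal.span {a} with hI
  have hMt : Module.IsTorsionBy A ↥P a := by
    rintro ⟨x, hx⟩
    obtain ⟨y, hy, rfl⟩ := hx
    have : a • φ y = φ (a • y) := (map_smul φ a y).symm
    have hz : φ (a • y) = 0 := (Submodule.Quotient.mk_eq_zero _).mpr (ha y hy)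
    apply Subtype.ext
    simp [this, hz]
  have hMts : Module.IsTorsionBySet A ↥P (I : Set A) := by
    rw [hI, ← Ideal.submodule_span_eq, Module.isTorsionBySet_span_singleton_iff]
    exact hMt
  -- `A ⧸ I` has finitely many ideals, hence is Artinian
  obtain ⟨ϖ, hϖ⟩ := IsDiscreteValuationRing.exists_irreducible A
  have hIbot : I ≠ ⊥ := by
    rw [hI, Ne, Ideal.span_singleton_eq_bot]; exact ha0
  obtain ⟨n, hn⟩ := IsDiscreteValuationRing.ideal_eq_span_pow_irreducible hIbot hϖ
  have hset : {J : Ideal A | I ≤ J} ⊆ (fun k => Ideal.span {ϖ ^ k}) '' (Set.Iic n) := by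
    intro J hJ
    have haJ : a ∈ J := hJ (Ideal.subset_span rfl)
    have hJbot : J ≠ ⊥ := by
      rintro rfl
      exact ha0 ((Submodule.mem_bot A).mp haJ)
    obtain ⟨k, hk⟩ := IsDiscreteValuationRing.ideal_eq_span_pow_irreducible hJbot hϖ
    refine ⟨k, ?_, hk.symm⟩
    have hπn : ϖ ^ n ∈ J := hJ (hn ▸ Ideal.subset_span rfl)
    rw [hk, Ideal.mem_span_singleton] at hπn
    exact (pow_dvd_pow_iff hϖ.ne_zero hϖ.not_isUnit).mp hπn
  have hfin : {J : Ideal A | I ≤ J}.Finite := ((Set.finite_Iic n).image _).subset hset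
  haveI : Finite {J : Ideal A | I ≤ J} := hfin.to_subtype
  haveI : Finite (Ideal (A ⧸ I)) := by
    refine Finite.of_injective
      (fun J => (⟨J.comap (Ideal.Quotient.mk I), fun x hx => ?_⟩ : {J : Ideal A | I ≤ J})) ?_
    · have : (Ideal.Quotient.mk I) x = 0 := Ideal.Quotient.eq_zero_iff_mem.mpr hx
      simp [Ideal.mem_comap, this]
    · intro J₁ J₂ h
      exact Ideal.comap_injective_of_surjective _ Ideal.Quotient.mk_surjective
        (congrArg Subtype.val h)
  haveI : IsArtinianRing (A ⧸ I) := Finite.to_wellFoundedLT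
  -- `P` is an Artinian `A`-module
  letI : Module (A ⧸ I) ↥P := hMts.module
  haveI : IsScalarTower A (A ⧸ I) ↥P := hMts.isScalarTower
  haveI : Module.Finite A ↥P := Module.Finite.iff_fg.mpr (Submodule.FG.map _ ⟨s, hs⟩)
  haveI : Module.Finite (A ⧸ I) ↥P := Module.Finite.of_restrictScalars_finite A _ _
  haveI : IsArtinian (A ⧸ I) ↥P := inferInstance
  haveI hart : IsArtinian A ↥P := by
    let e : Submodule A ↥P → Submodule (A ⧸ I) ↥P := fun q =>
      { carrier := q
        add_mem' := fun h1 h2 => q.add_mem h1 h2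
        zero_mem' := q.zero_mem
        smul_mem' := by
          intro c x hx
          obtain ⟨b, rfl⟩ := Ideal.Quotient.mk_surjective c
          exact q.smul_mem b hx }
    have he : StrictMono e := by
      intro q1 q2 h
      rw [lt_iff_le_not_ge] at h ⊢
      exact ⟨fun x hx => h.1 hx, fun hle => h.2 fun x hx => hle hx⟩
    exact he.wellFoundedLT
  -- the chain of images in `P` stabilizes
  have hPle : ∀ m : ℕ, (N (d + m)).map φ ≤ P := fun m =>
    Submodule.map_mono (hdec d (d + m) (Nat.le_add_right d m))
  set g : ℕ →o (Submodule A ↥P)ᵒᵈ :=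
    ⟨fun i => OrderDual.toDual (((N (d + i)).map φ).comap P.subtype), by
      intro i j hij
      exact Submodule.comap_mono (Submodule.map_mono (hdec _ _ (by omega)))⟩ with hg
  obtain ⟨n0, hn0⟩ := IsArtinian.monotone_stabilizes g
  have hstab : ∀ m, n0 ≤ m → N (d + m) = N (d + n0) := by
    intro m hm
    have h1 : (((N (d + n0)).map φ).comap P.subtype) = (((N (d + m)).map φ).comap P.subtype) :=
      congrArg OrderDual.ofDual (hn0 m hm)
    have h2 : (N (d + n0)).map φ = (N (d + m)).map φ := by
      have e1 := congrArg (Submodule.map P.subtype) h1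
      rwa [Submodule.map_comap_subtype, Submodule.map_comap_subtype,
        inf_of_le_right (hPle n0), inf_of_le_right (hPle m)] at e1
    have e2 := congrArg (Submodule.comap φ) h2
    rw [hφ, Submodule.comap_map_mkQ, Submodule.comap_map_mkQ,
      sup_of_le_right (hinf_le (d + n0)), sup_of_le_right (hinf_le (d + m))] at e2
    exact e2.symm
  refine ⟨d + n0, ?_⟩
  have hkey : N (d + n0) = Ninf := by
    refine le_antisymm (le_iInf fun j => ?_) (hinf_le _)
    rcases le_total j (d + n0) with hj | hj
    · exact le_trans (by rw [hstab n0 le_rfl]) (hdec j (d + n0) hj)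
    · have : N j = N (d + n0) := by
        have : j = d + (j - d) := by omega
        rw [this, hstab (j - d) (by omega)]
      rw [this]
  intro i hi
  have : i = d + (i - d) := by omega
  rw [this, hstab (i - d) (by omega), hkey]
end
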